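/- Let f(x) = max(−1, min(1, x)) and K be even, nonnegative, supported in [−2,2], nonincreasing on [0,2], with ∫K ≥ 2. Define B = {u : [−r,r] → ℝ : u(x)=1 for x>1, u(x)=−1 for x<−1, u odd and nondecreasing} with r > 4. Then u ↦ f((K∗ũ)|_{[−r,r]}) maps B into B. -/

import Mathlib

open MeasureTheory

/-- The saturation function `f(x) = max(−1, min(1, x))`. -/
noncomputable def sat (x : ℝ) : ℝ := max (-1) (min 1 x)

/-- Membership in the invariant set `B` (gap of width `2c`): `u = 1` on `(c, r]`, `u = −1` on
`[−r, −c)`, `u` odd and nondecreasing on `[−r, r]`. -/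
def memB (r c : ℝ) (u : ℝ → ℝ) : Prop :=
  (∀ x : ℝ, c < x → x ≤ r → u x = 1) ∧
  (∀ x : ℝ, x < -c → -r ≤ x → u x = -1) ∧
  (∀ x ∈ Set.Icc (-r) r, u (-x) = -u x) ∧
  MonotoneOn u (Set.Icc (-r) r)

lemma sat_le_one (x : ℝ) : sat x ≤ 1 := max_le (by norm_num) (min_le_left _ _)

lemma neg_one_le_sat (x : ℝ) : -1 ≤ sat x := le_max_left _ _

lemma sat_mono : Monotone sat := fun a b h => max_le_max le_rfl (min_le_min le_rfl h)

lemma sat_of_one_le {x : ℝ} (h : 1 ≤ x) : sat x = 1 := by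
  simp only [sat, min_eq_left h]
  exact max_eq_right (by norm_num)

lemma sat_of_le_neg_one {x : ℝ} (h : x ≤ -1) : sat x = -1 := by
  simp only [sat, min_eq_right (by linarith : x ≤ 1)]
  exact max_eq_left h

lemma sat_neg (x : ℝ) : sat (-x) = - sat x := by
  simp only [sat, min_def, max_def]
  split_ifs <;> linarith

/-- Let `f` be the saturation function and `K` even, nonnegative, supported in
`[−2,2]`, nonincreasing on `[0,2]`, with `∫K ≥ 2`.  With
`B = {u : [−r,r] → ℝ : u = 1 for x > 1, u = −1 for x < −1, u odd and nondecreasing}` (`r > 4`),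
the map `u ↦ f((K ∗ ũ)|_{[−r,r]})` maps `B` into `B`. -/
theorem invariant_set_positive_kernel_gap_one
    (r : ℝ) (hr : 4 < r)
    (K : ℝ → ℝ) (hKi : Integrable K volume)
    (hKeven : ∀ z, K (-z) = K z) (hKpos : ∀ z, 0 ≤ K z)
    (hKsupp : Function.support K ⊆ Set.Icc (-2) 2)
    (hKmono : AntitoneOn K (Set.Icc 0 2))
    (hKmass : 2 ≤ ∫ z, K z)
    (u : ℝ → ℝ) (hum : Measurable u) (hu : memB r 1 u) :
    memB r 1 (fun x => sat (∫ y, K (x - y) * Set.indicator (Set.Icc (-r) r) u y)) := by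
  obtain ⟨h1, h2, hodd, hmono⟩ := hu
  set w : ℝ → ℝ := Set.indicator (Set.Icc (-r) r) u with hwdef
  -- basic facts about u and w
  have hu0 : u 0 = 0 := by
    have h := hodd 0 ⟨by linarith, by linarith⟩
    rw [neg_zero] at h; linarith
  have hur : u r = 1 := h1 r (by linarith) le_rfl
  have hunr : u (-r) = -1 := h2 (-r) (by linarith) le_rfl
  have hw_eq : ∀ y : ℝ, -r ≤ y → y ≤ r → w y = u y := by
    intro y h h'
    rw [hwdef]
    exact Set.indicator_of_mem (Set.mem_Icc.mpr ⟨h, h'⟩) u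
  have hw_zero : ∀ y : ℝ, r < y → w y = 0 := by
    intro y hy
    rw [hwdef]
    exact Set.indicator_of_notMem (fun h => absurd h.2 (not_le.mpr hy)) u
  have hw_zero' : ∀ y : ℝ, y < -r → w y = 0 := by
    intro y hy
    rw [hwdef]
    exact Set.indicator_of_notMem (fun h => absurd h.1 (not_le.mpr hy)) u
  have hw_one : ∀ y : ℝ, 1 < y → y ≤ r → w y = 1 := by
    intro y hy hy'
    rw [hw_eq y (by linarith) hy']
    exact h1 y hy hy'
  have hw_nonneg : ∀ y : ℝ, 0 ≤ y → 0 ≤ w y := by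
    intro y hy
    rcases le_or_gt y r with h | h
    · rw [hw_eq y (by linarith) h, ← hu0]
      exact hmono ⟨by linarith, by linarith⟩ ⟨by linarith, h⟩ hy
    · rw [hw_zero y h]
  have hw_le : ∀ y : ℝ, |w y| ≤ 1 := by
    intro y
    rcases le_or_gt y r with h | h
    · rcases le_or_gt (-r) y with h' | h'
      · rw [hw_eq y h' h, abs_le]
        constructor
        · rw [← hunr]
          exact hmono ⟨le_rfl, by linarith⟩ ⟨h', h⟩ h'
        · rw [← hur]
          exact hmono ⟨h', h⟩ ⟨by linarith, le_rfl⟩ h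
      · rw [hw_zero' y h']; norm_num
    · rw [hw_zero y h]; norm_num
  have hw_odd : ∀ y : ℝ, w (-y) = - w y := by
    intro y
    rcases le_or_gt y r with h | h
    · rcases le_or_gt (-r) y with h' | h'
      · rw [hw_eq (-y) (by linarith) (by linarith), hw_eq y h' h]
        exact hodd y ⟨h', h⟩
      · rw [hw_zero (-y) (by linarith), hw_zero' y h', neg_zero]
    · rw [hw_zero' (-y) (by linarith), hw_zero y h, neg_zero]
  have hw_meas : Measurable w := by
    rw [hwdef]
    exact hum.indicator measurableSet_Icc
  -- facts about K
  have hK0 : ∀ t : ℝ, 2 < t → K t = 0 := by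
    intro t ht
    by_contra h
    have := hKsupp (Function.mem_support.mpr h)
    exact absurd this.2 (not_le.mpr ht)
  have hK_anti : ∀ s t : ℝ, 0 ≤ s → s ≤ t → K t ≤ K s := by
    intro s t hs hst
    rcases le_or_gt t 2 with h | h
    · exact hKmono ⟨hs, by linarith⟩ ⟨by linarith, h⟩ hst
    · rw [hK0 t h]; exact hKpos s
  -- integrability helper
  have hmul : ∀ K' g : ℝ → ℝ, Integrable K' volume → Measurable g → (∀ y, |g y| ≤ 1) →
      Integrable (fun t => K' t * g t) volume := by
    intro K' g hK' hg hb
    have h := hK'.bdd_mul hg.aestronglyMeasurable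
      (c := 1) (Filter.Eventually.of_forall fun y => by simpa [Real.norm_eq_abs] using hb y)
    exact h.congr (Filter.Eventually.of_forall fun t => mul_comm (g t) (K' t))
  have hwshift : ∀ c : ℝ, Measurable fun t => w (c - t) :=
    fun c => hw_meas.comp (measurable_const.sub measurable_id)
  have hwshift' : ∀ c : ℝ, Measurable fun t => w (c + t) :=
    fun c => hw_meas.comp (measurable_const.add measurable_id)
  have hI1 : ∀ x : ℝ, Integrable (fun y => K (x - y) * w y) volume :=
    fun x => hmul _ _ (hKi.comp_sub_left x) hw_meas hw_le
  have hI2 : ∀ x : ℝ, Integrable (fun t => K t * w (x - t)) volume :=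
    fun x => hmul _ _ hKi (hwshift x) (fun y => hw_le _)
  have hI3 : ∀ x : ℝ, Integrable (fun t => K t * w (x + t)) volume :=
    fun x => hmul _ _ hKi (hwshift' x) (fun y => hw_le _)
  set v : ℝ → ℝ := fun x => ∫ y, K (x - y) * w y with hvdef
  -- change of variables
  have hconv : ∀ x : ℝ, v x = ∫ t, K t * w (x - t) := by
    intro x
    have h := integral_sub_left_eq_self (fun y => K (x - y) * w y) volume x
    simp only [sub_sub_cancel] at h
    exact h.symm
  -- oddness of v
  have hv_odd : ∀ x : ℝ, v (-x) = - v x := by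
    intro x
    have h1 := integral_neg_eq_self (fun y => K (-x - y) * w y) volume
    have h2 : ∀ y : ℝ, K (-x - -y) * w (-y) = -(K (x - y) * w y) := by
      intro y
      rw [hw_odd y, show -x - -y = -(x - y) by ring, hKeven]
      ring
    show (∫ y, K (-x - y) * w y) = - v x
    rw [← h1]
    simp only [h2]
    rw [integral_neg]
  -- disjointness helpers
  have hdisj : ∀ a b c : ℝ, Disjoint (Set.Ioc a b) (Set.Ioc b c) := by
    intro a b c
    apply Set.disjoint_left.mpr
    rintro t ⟨_, ht1⟩ ⟨ht2, _⟩
    linarith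
  -- splitting Ioi 0 integrals
  have hsplit_Ioi : ∀ F : ℝ → ℝ, Integrable F volume → (∀ t : ℝ, 2 < t → F t = 0) →
      ∫ t in Set.Ioi (0:ℝ), F t = ∫ t in Set.Ioc (0:ℝ) 2, F t := by
    intro F hF hF0
    rw [← Set.Ioc_union_Ioi_eq_Ioi (by norm_num : (0:ℝ) ≤ 2),
      setIntegral_union Set.Ioc_disjoint_Ioi_same measurableSet_Ioi
        hF.integrableOn hF.integrableOn,
      setIntegral_eq_zero_of_forall_eq_zero (fun t (ht : t ∈ Set.Ioi (2:ℝ)) => hF0 t ht), add_zero]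
  -- half mass bound
  have hIoc2 : (1:ℝ) ≤ ∫ t in Set.Ioc (0:ℝ) 2, K t := by
    have hsym : ∫ t in Set.Iic (0:ℝ), K t = ∫ t in Set.Ioi (0:ℝ), K t := by
      have h := integral_comp_neg_Ioi (0:ℝ) K
      simp only [hKeven, neg_zero] at h
      exact h.symm
    have hcompl := integral_add_compl (measurableSet_Iic (a := (0:ℝ))) hKi
    rw [Set.compl_Iic] at hcompl
    have hs := hsplit_Ioi K hKi hK0
    linarith
  -- folding to (0,2]
  have hfold : ∀ x : ℝ, v x = (∫ t in Set.Ioc (0:ℝ) 2, K t * w (x + t))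
      + ∫ t in Set.Ioc (0:ℝ) 2, K t * w (x - t) := by
    intro x
    rw [hconv x]
    have hcompl := integral_add_compl (measurableSet_Iic (a := (0:ℝ))) (hI2 x)
    rw [Set.compl_Iic] at hcompl
    have hsym : ∫ t in Set.Iic (0:ℝ), K t * w (x - t)
        = ∫ t in Set.Ioi (0:ℝ), K t * w (x + t) := by
      have h := integral_comp_neg_Ioi (0:ℝ) (fun t => K t * w (x - t))
      simp only [hKeven, neg_zero, sub_neg_eq_add] at h
      exact h.symm
    rw [← hcompl, hsym, hsplit_Ioi _ (hI3 x) (fun t ht => by rw [hK0 t ht, zero_mul]),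
      hsplit_Ioi _ (hI2 x) (fun t ht => by rw [hK0 t ht, zero_mul])]
  -- the key lower bound
  have hkey : ∀ x : ℝ, 1 < x → x ≤ r → 1 ≤ v x := by
    intro x hx1 hxr
    rw [hfold x]
    rcases le_or_gt x 2 with hx2 | hx2
    · -- Case 1 : 1 < x ≤ 2
      have hB : ∫ t in Set.Ioc (0:ℝ) 2, K t * w (x + t) = ∫ t in Set.Ioc (0:ℝ) 2, K t := by
        apply setIntegral_congr_fun measurableSet_Ioc
        intro t ht
        show K t * w (x + t) = K t
        rw [hw_one (x + t) (by linarith [ht.1]) (by linarith [ht.2]), mul_one]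
      have hA : 0 ≤ ∫ t in Set.Ioc (0:ℝ) 2, K t * w (x - t) := by
        have hsplitA : ∫ t in Set.Ioc (0:ℝ) 2, K t * w (x - t)
            = (∫ t in Set.Ioc (0:ℝ) x, K t * w (x - t))
              + ∫ t in Set.Ioc x 2, K t * w (x - t) := by
          rw [← setIntegral_union (hdisj 0 x 2) measurableSet_Ioc
            (hI2 x).integrableOn (hI2 x).integrableOn,
            Set.Ioc_union_Ioc_eq_Ioc (by linarith) (by linarith)]
        have hmono1 : (∫ t in Set.Ioc (2*x-2) x, K t * w (x - t))
            ≤ ∫ t in Set.Ioc (0:ℝ) x, K t * w (x - t) := by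
          apply setIntegral_mono_set (hI2 x).integrableOn
          · apply (ae_restrict_iff' measurableSet_Ioc).mpr
            apply Filter.Eventually.of_forall
            intro t ht
            exact mul_nonneg (hKpos t) (hw_nonneg _ (by linarith [ht.2]))
          · exact (Set.Ioc_subset_Ioc_left (by linarith)).eventuallyLE
        have hQ : (∫ t in Set.Ioc (2*x-2) x, K t * w (x - t))
            = ∫ s in Set.Ioc (0:ℝ) (2 - x), K (x - s) * w s := by
          rw [← intervalIntegral.integral_of_le (by linarith : 2*x - 2 ≤ x),
              ← intervalIntegral.integral_of_le (by linarith : (0:ℝ) ≤ 2 - x)]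
          have h := intervalIntegral.integral_comp_sub_left
            (a := (0:ℝ)) (b := 2 - x) (f := fun t => K t * w (x - t)) x
          simp only [sub_sub_cancel, sub_zero] at h
          rw [show x - (2 - x) = 2*x - 2 by ring] at h
          exact h.symm
        have hP : (∫ t in Set.Ioc x 2, K t * w (x - t))
            = - ∫ s in Set.Ioc (0:ℝ) (2 - x), K (s + x) * w s := by
          have hc : Set.EqOn (fun t => K t * w (x - t)) (fun t => -(K t * w (t - x)))
              (Set.Ioc x 2) := by
            intro t ht
            show K t * w (x - t) = -(K t * w (t - x))
            rw [show x - t = -(t - x) by ring, hw_odd]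
            ring
          rw [setIntegral_congr_fun measurableSet_Ioc hc, integral_neg]
          congr 1
          rw [← intervalIntegral.integral_of_le (by linarith : x ≤ 2),
              ← intervalIntegral.integral_of_le (by linarith : (0:ℝ) ≤ 2 - x)]
          have h := intervalIntegral.integral_comp_add_right
            (a := (0:ℝ)) (b := 2 - x) (f := fun t => K t * w (t - x)) x
          simp only [add_sub_cancel_right] at h
          rw [show (0:ℝ) + x = x by ring, show 2 - x + x = 2 by ring] at h
          exact h.symm
        have hsub : ∫ s in Set.Ioc (0:ℝ) (2 - x), (K (x - s) * w s - K (s + x) * w s)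
            = (∫ s in Set.Ioc (0:ℝ) (2 - x), K (x - s) * w s)
              - ∫ s in Set.Ioc (0:ℝ) (2 - x), K (s + x) * w s := by
          apply integral_sub
          · exact (hmul _ _ (hKi.comp_sub_left x) hw_meas hw_le).integrableOn
          · exact (hmul _ _ (hKi.comp_add_right x) hw_meas hw_le).integrableOn
        have hdiff : 0 ≤ ∫ s in Set.Ioc (0:ℝ) (2 - x), (K (x - s) * w s - K (s + x) * w s) := by
          apply setIntegral_nonneg measurableSet_Ioc
          intro s hs
          have hh1 : K (s + x) ≤ K (x - s) :=
            hK_anti (x - s) (s + x) (by linarith [hs.2]) (by linarith [hs.1])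
          have hh2 : 0 ≤ w s := hw_nonneg s (le_of_lt hs.1)
          nlinarith
        rw [hsub] at hdiff
        rw [hQ] at hmono1
        rw [hsplitA, hP]
        linarith
      rw [hB]
      linarith
    · -- Case 2 : 2 < x ≤ r
      set a := min (x - 1) 2 with ha
      set b := min (r - x) 2 with hb
      have ha1 : 1 ≤ a := le_min (by linarith) (by norm_num)
      have ha2 : a ≤ 2 := min_le_right _ _
      have hb0 : 0 ≤ b := le_min (by linarith) (by norm_num)
      have hab : 2 - a ≤ b := by
        rcases le_total (x - 1) 2 with h | h
        · rw [ha, min_eq_left h]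
          exact le_min (by linarith) (by linarith)
        · rw [ha, min_eq_right h]
          linarith
      have hA : (∫ t in Set.Ioc (0:ℝ) a, K t) ≤ ∫ t in Set.Ioc (0:ℝ) 2, K t * w (x - t) := by
        have hne : ∀ᵐ t : ℝ, t ≠ x - 1 := by
          rw [MeasureTheory.ae_iff]
          simp only [ne_eq, not_not, Set.setOf_eq_eq_singleton]
          exact measure_singleton _
        have hmono2 : ∫ t in Set.Ioc (0:ℝ) 2, (Set.Ioc (0:ℝ) (x-1)).indicator K t
            ≤ ∫ t in Set.Ioc (0:ℝ) 2, K t * w (x - t) := by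
          apply setIntegral_mono_on_ae (hKi.indicator measurableSet_Ioc).integrableOn
            (hI2 x).integrableOn measurableSet_Ioc
          filter_upwards [hne] with t htne ht
          by_cases hmem : t ∈ Set.Ioc (0:ℝ) (x - 1)
          · rw [Set.indicator_of_mem hmem,
              hw_one (x - t) (by have := lt_of_le_of_ne hmem.2 htne; linarith)
                (by linarith [ht.1]), mul_one]
          · rw [Set.indicator_of_notMem hmem]
            exact mul_nonneg (hKpos t) (hw_nonneg _ (by linarith [ht.2]))
        rwa [setIntegral_indicator measurableSet_Ioc, Set.Ioc_inter_Ioc,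
          show (0:ℝ) ⊔ 0 = 0 by simp, show (2:ℝ) ⊓ (x - 1) = a by rw [ha, inf_comm]]
          at hmono2
      have hB : (∫ t in Set.Ioc (0:ℝ) b, K t) ≤ ∫ t in Set.Ioc (0:ℝ) 2, K t * w (x + t) := by
        have hmono2 : ∫ t in Set.Ioc (0:ℝ) 2, (Set.Ioc (0:ℝ) (r-x)).indicator K t
            ≤ ∫ t in Set.Ioc (0:ℝ) 2, K t * w (x + t) := by
          apply setIntegral_mono_on (hKi.indicator measurableSet_Ioc).integrableOn
            (hI3 x).integrableOn measurableSet_Ioc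
          intro t ht
          by_cases hmem : t ∈ Set.Ioc (0:ℝ) (r - x)
          · rw [Set.indicator_of_mem hmem,
              hw_one (x + t) (by linarith [ht.1]) (by linarith [hmem.2]), mul_one]
          · rw [Set.indicator_of_notMem hmem]
            exact mul_nonneg (hKpos t) (hw_nonneg _ (by linarith [ht.1]))
        rwa [setIntegral_indicator measurableSet_Ioc, Set.Ioc_inter_Ioc,
          show (0:ℝ) ⊔ 0 = 0 by simp, show (2:ℝ) ⊓ (r - x) = b by rw [hb, inf_comm]]
          at hmono2
      have hsplit2 : ∫ t in Set.Ioc (0:ℝ) 2, K t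
          = (∫ t in Set.Ioc (0:ℝ) a, K t) + ∫ t in Set.Ioc a 2, K t := by
        rw [← setIntegral_union (hdisj 0 a 2) measurableSet_Ioc
          hKi.integrableOn hKi.integrableOn,
          Set.Ioc_union_Ioc_eq_Ioc (by linarith) ha2]
      have htrans1 : (∫ t in Set.Ioc a 2, K t) ≤ ∫ t in Set.Ioc (0:ℝ) (2 - a), K t := by
        have heq : (∫ s in Set.Ioc (0:ℝ) (2 - a), K (s + a)) = ∫ t in Set.Ioc a 2, K t := by
          rw [← intervalIntegral.integral_of_le (by linarith : a ≤ 2),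
              ← intervalIntegral.integral_of_le (by linarith : (0:ℝ) ≤ 2 - a)]
          have h := intervalIntegral.integral_comp_add_right
            (a := (0:ℝ)) (b := 2 - a) (f := K) a
          rw [show (0:ℝ) + a = a by ring, show 2 - a + a = 2 by ring] at h
          exact h
        rw [← heq]
        apply setIntegral_mono_on (hKi.comp_add_right a).integrableOn
          hKi.integrableOn measurableSet_Ioc
        intro t ht
        exact hK_anti t (t + a) (le_of_lt ht.1) (by linarith)
      have htrans2 : (∫ t in Set.Ioc (0:ℝ) (2-a), K t) ≤ ∫ t in Set.Ioc (0:ℝ) b, K t := by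
        apply setIntegral_mono_set hKi.integrableOn
          (Filter.Eventually.of_forall fun t => hKpos t)
        exact (Set.Ioc_subset_Ioc_right hab).eventuallyLE
      linarith
  -- monotonicity in the middle
  have hmid : ∀ x1 x2 : ℝ, -1 ≤ x1 → x1 ≤ x2 → x2 ≤ 1 → v x1 ≤ v x2 := by
    intro x1 x2 hha hhab hhb
    rw [hconv x1, hconv x2]
    apply integral_mono (hI2 x1) (hI2 x2)
    intro t
    by_cases hKt : K t = 0
    · simp [hKt]
    · have hts := hKsupp (Function.mem_support.mpr hKt)
      have hm1 : x1 - t ∈ Set.Icc (-r) r := ⟨by linarith [hts.2], by linarith [hts.1]⟩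
      have hm2 : x2 - t ∈ Set.Icc (-r) r := ⟨by linarith [hts.2], by linarith [hts.1]⟩
      have hle := hmono hm1 hm2 (by linarith)
      show K t * w (x1 - t) ≤ K t * w (x2 - t)
      rw [hw_eq _ hm1.1 hm1.2, hw_eq _ hm2.1 hm2.2]
      exact mul_le_mul_of_nonneg_left hle (hKpos t)
  -- assemble
  refine ⟨?_, ?_, ?_, ?_⟩
  · intro x hx1 hxr
    exact sat_of_one_le (hkey x hx1 hxr)
  · intro x hx1 hxr
    have h := hkey (-x) (by linarith) (by linarith)
    rw [hv_odd x] at h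
    exact sat_of_le_neg_one (by linarith : v x ≤ -1)
  · intro x hx
    show sat (v (-x)) = - sat (v x)
    rw [hv_odd x, sat_neg]
  · intro x1 hx1 x2 hx2 h12
    show sat (v x1) ≤ sat (v x2)
    rcases lt_or_ge 1 x2 with h | h
    · rw [sat_of_one_le (hkey x2 h hx2.2)]
      exact sat_le_one _
    rcases lt_or_ge x1 (-1) with h' | h'
    · have hk := hkey (-x1) (by linarith) (by linarith [hx1.1])
      rw [hv_odd x1] at hk
      rw [sat_of_le_neg_one (by linarith : v x1 ≤ -1)]
      exact neg_one_le_sat _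
    · exact sat_mono (hmid x1 x2 h' h12 h)
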